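/- Let τ = (τ_{ij}) ∈ M_2(ℂ) with det(Im τ) ≠ 0. Then ρ(τ) = 6 − dim_ℚ V, where V is the ℚ-linear span in ℂ of the six numbers 1, τ_{11}, τ_{12}, τ_{21}, τ_{22}, det τ. -/

import Mathlib

open Matrix Module IntermediateField
open scoped ComplexOrder

noncomputable section

/-- The period matrix `Π(τ) = (τ | I_g)`, a `g × 2g` complex matrix. -/
def PeriodMatrix (g : ℕ) (τ : Matrix (Fin g) (Fin g) ℂ) :
    Matrix (Fin g) (Fin g ⊕ Fin g) ℂ :=
  Matrix.fromCols τ 1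

/-- Entrywise inclusion `ℚ → ℂ` on square matrices, as an algebra homomorphism. -/
def mapQC (g : ℕ) : Matrix (Fin g) (Fin g) ℚ →ₐ[ℚ] Matrix (Fin g) (Fin g) ℂ :=
  (Algebra.ofId ℚ ℂ).mapMatrix

/-- The ℚ-vector space `N(τ)` of triples `(A,B,C)` of rational `g × g` matrices with
`A, C` skew-symmetric and `A - Bτ + τᵗBᵗ + τᵗCτ = 0`; its dimension is the Picard
number of the complex torus `X_τ`. -/
def NSSpace (g : ℕ) (τ : Matrix (Fin g) (Fin g) ℂ) :
    Submodule ℚ (Matrix (Fin g) (Fin g) ℚ × Matrix (Fin g) (Fin g) ℚ ×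
      Matrix (Fin g) (Fin g) ℚ) where
  carrier := {x | x.1ᵀ = -x.1 ∧ x.2.2ᵀ = -x.2.2 ∧
    mapQC g x.1 - mapQC g x.2.1 * τ + τᵀ * (mapQC g x.2.1)ᵀ + τᵀ * mapQC g x.2.2 * τ = 0}
  add_mem' := by
    rintro a b ⟨ha1, ha2, ha3⟩ ⟨hb1, hb2, hb3⟩
    refine ⟨by simp [Matrix.transpose_add, ha1, hb1]; abel,
      by simp [Matrix.transpose_add, ha2, hb2]; abel, ?_⟩
    have key : mapQC g (a + b).1 - mapQC g (a + b).2.1 * τ + τᵀ * (mapQC g (a + b).2.1)ᵀ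
        + τᵀ * mapQC g (a + b).2.2 * τ
        = (mapQC g a.1 - mapQC g a.2.1 * τ + τᵀ * (mapQC g a.2.1)ᵀ + τᵀ * mapQC g a.2.2 * τ)
        + (mapQC g b.1 - mapQC g b.2.1 * τ + τᵀ * (mapQC g b.2.1)ᵀ
          + τᵀ * mapQC g b.2.2 * τ) := by
      simp only [Prod.fst_add, Prod.snd_add, map_add, Matrix.add_mul, Matrix.mul_add,
        Matrix.transpose_add]
      abel
    rw [key, ha3, hb3, add_zero]
  zero_mem' := by
    refine ⟨by simp, by simp, ?_⟩
    simp
  smul_mem' := by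
    rintro q a ⟨ha1, ha2, ha3⟩
    refine ⟨by simp [Matrix.transpose_smul, ha1], by simp [Matrix.transpose_smul, ha2], ?_⟩
    have key : mapQC g (q • a).1 - mapQC g (q • a).2.1 * τ + τᵀ * (mapQC g (q • a).2.1)ᵀ
        + τᵀ * mapQC g (q • a).2.2 * τ
        = q • (mapQC g a.1 - mapQC g a.2.1 * τ + τᵀ * (mapQC g a.2.1)ᵀ
          + τᵀ * mapQC g a.2.2 * τ) := by
      simp only [Prod.smul_fst, Prod.smul_snd, _root_.map_smul, Matrix.transpose_smul,
        smul_mul_assoc, mul_smul_comm]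
      module
    rw [key, ha3, smul_zero]

/-- The Picard number `ρ(τ) = dim_ℚ N(τ)` of the complex torus `X_τ`. -/
def picard (g : ℕ) (τ : Matrix (Fin g) (Fin g) ℂ) : ℕ :=
  Module.finrank ℚ (NSSpace g τ)

lemma vec6_five {α : Type*} (a b c d e f : α) : ![a, b, c, d, e, f] 5 = f := rfl

/-- The linear functional on ℚ^6 given by the six numbers 1, τ_{ij}, det τ. -/
def Lmap (τ : Matrix (Fin 2) (Fin 2) ℂ) : (Fin 6 → ℚ) →ₗ[ℚ] ℂ where
  toFun v := (v 0 : ℂ) + v 1 * τ 0 0 + v 2 * τ 0 1 + v 3 * τ 1 0 + v 4 * τ 1 1 + v 5 * τ.det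
  map_add' a b := by simp only [Pi.add_apply]; push_cast; ring
  map_smul' q a := by simp only [Pi.smul_apply, smul_eq_mul, RingHom.id_apply, Rat.smul_def]
                      push_cast; ring

/-- Parametrization of triples with skew `A, C`. -/
def iotaMap : (Fin 6 → ℚ) →ₗ[ℚ] (Matrix (Fin 2) (Fin 2) ℚ × Matrix (Fin 2) (Fin 2) ℚ ×
    Matrix (Fin 2) (Fin 2) ℚ) where
  toFun v := (!![0, v 0; -v 0, 0], !![-(v 2), -(v 4); v 1, v 3], !![0, v 5; -(v 5), 0])
  map_add' a b := by
    refine Prod.ext ?_ (Prod.ext ?_ ?_) <;>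
      · ext i j; fin_cases i <;> fin_cases j <;> simp <;> ring
  map_smul' q a := by
    refine Prod.ext ?_ (Prod.ext ?_ ?_) <;>
      · ext i j; fin_cases i <;> fin_cases j <;> simp [Matrix.smul_apply] <;> ring

lemma iotaMap_injective : Function.Injective iotaMap := by
  intro v w h
  have h1 := congrArg (fun x => x.1 0 1) h
  have h2 := congrArg (fun x => x.2.1 1 0) h
  have h3 := congrArg (fun x => x.2.1 0 0) h
  have h4 := congrArg (fun x => x.2.1 1 1) h
  have h5 := congrArg (fun x => x.2.1 0 1) h
  have h6 := congrArg (fun x => x.2.2 0 1) h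
  simp [iotaMap] at h1 h2 h3 h4 h5 h6
  funext i
  fin_cases i
  exacts [h1, h2, h3, h4, h5, h6]

lemma mapQC_apply (x : Matrix (Fin 2) (Fin 2) ℚ) (i j : Fin 2) :
    mapQC 2 x i j = (x i j : ℂ) := rfl

lemma iota_mem_iff (τ : Matrix (Fin 2) (Fin 2) ℂ) (v : Fin 6 → ℚ) :
    iotaMap v ∈ NSSpace 2 τ ↔ Lmap τ v = 0 := by
  have hL : Lmap τ v = (v 0 : ℂ) + v 1 * τ 0 0 + v 2 * τ 0 1 + v 3 * τ 1 0 + v 4 * τ 1 1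
      + v 5 * τ.det := rfl
  constructor
  · rintro ⟨-, -, h3⟩
    have h01 := congrArg (fun M => M 0 1) h3
    simp [iotaMap, Matrix.mul_apply, Fin.sum_univ_two, mapQC_apply] at h01
    rw [hL, Matrix.det_fin_two]
    push_cast at h01 ⊢
    linear_combination h01
  · intro h
    rw [hL, Matrix.det_fin_two] at h
    refine ⟨?_, ?_, ?_⟩
    · ext i j; fin_cases i <;> fin_cases j <;> simp [iotaMap]
    · ext i j; fin_cases i <;> fin_cases j <;> simp [iotaMap]
    · ext i j
      simp only [iotaMap, LinearMap.coe_mk, AddHom.coe_mk]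
      fin_cases i <;> fin_cases j <;>
        · simp [Matrix.mul_apply, Fin.sum_univ_two, mapQC_apply]
          try push_cast
          try first
            | linear_combination h
            | linear_combination -h
            | ring
          
lemma NSSpace_eq (τ : Matrix (Fin 2) (Fin 2) ℂ) :
    NSSpace 2 τ = Submodule.map iotaMap (LinearMap.ker (Lmap τ)) := by
  ext x
  constructor
  · rintro hx
    obtain ⟨h1, h2, -⟩ := id hx
    set v : Fin 6 → ℚ := ![x.1 0 1, x.2.1 1 0, -(x.2.1 0 0), x.2.1 1 1, -(x.2.1 0 1), x.2.2 0 1]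
      with hv
    have hA00 : x.1 0 0 = 0 := by
      have := congrArg (fun M => M 0 0) h1; simp at this; linarith
    have hA11 : x.1 1 1 = 0 := by
      have := congrArg (fun M => M 1 1) h1; simp at this; linarith
    have hA10 : x.1 1 0 = -(x.1 0 1) := by
      have := congrArg (fun M => M 0 1) h1; simpa using this
    have hC00 : x.2.2 0 0 = 0 := by
      have := congrArg (fun M => M 0 0) h2; simp at this; linarith
    have hC11 : x.2.2 1 1 = 0 := by
      have := congrArg (fun M => M 1 1) h2; simp at this; linarith
    have hC10 : x.2.2 1 0 = -(x.2.2 0 1) := by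
      have := congrArg (fun M => M 0 1) h2; simpa using this
    have hiv : iotaMap v = x := by
      refine Prod.ext ?_ (Prod.ext ?_ ?_) <;>
        · ext i j
          fin_cases i <;> fin_cases j <;>
            simp [iotaMap, hv, hA00, hA11, hA10, hC00, hC11, hC10, vec6_five]
    refine ⟨v, LinearMap.mem_ker.mpr ((iota_mem_iff τ v).mp ?_), hiv⟩
    rw [hiv]; exact hx
  · rintro ⟨v, hv, rfl⟩
    exact (iota_mem_iff τ v).mpr hv

lemma range_Lmap (τ : Matrix (Fin 2) (Fin 2) ℂ) :
    LinearMap.range (Lmap τ) = Submodule.span ℚ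
      ({1, τ 0 0, τ 0 1, τ 1 0, τ 1 1, τ.det} : Set ℂ) := by
  apply le_antisymm
  · rintro z ⟨v, rfl⟩
    have : Lmap τ v = v 0 • (1 : ℂ) + v 1 • τ 0 0 + v 2 • τ 0 1 + v 3 • τ 1 0 + v 4 • τ 1 1
        + v 5 • τ.det := by
      simp [Lmap, Rat.smul_def]
    rw [this]
    have mem1 : (1 : ℂ) ∈ ({1, τ 0 0, τ 0 1, τ 1 0, τ 1 1, τ.det} : Set ℂ) := by simp
    have mem2 : τ 0 0 ∈ ({1, τ 0 0, τ 0 1, τ 1 0, τ 1 1, τ.det} : Set ℂ) := by simp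
    have mem3 : τ 0 1 ∈ ({1, τ 0 0, τ 0 1, τ 1 0, τ 1 1, τ.det} : Set ℂ) := by simp
    have mem4 : τ 1 0 ∈ ({1, τ 0 0, τ 0 1, τ 1 0, τ 1 1, τ.det} : Set ℂ) := by simp
    have mem5 : τ 1 1 ∈ ({1, τ 0 0, τ 0 1, τ 1 0, τ 1 1, τ.det} : Set ℂ) := by simp
    have mem6 : τ.det ∈ ({1, τ 0 0, τ 0 1, τ 1 0, τ 1 1, τ.det} : Set ℂ) := by simp
    repeat' apply Submodule.add_mem
    all_goals exact Submodule.smul_mem _ _ (Submodule.subset_span (by assumption))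
  · rw [Submodule.span_le]
    rintro z (rfl | rfl | rfl | rfl | rfl | rfl)
    · exact ⟨![1, 0, 0, 0, 0, 0], by simp [Lmap, vec6_five]⟩
    · exact ⟨![0, 1, 0, 0, 0, 0], by simp [Lmap, vec6_five]⟩
    · exact ⟨![0, 0, 1, 0, 0, 0], by simp [Lmap, vec6_five]⟩
    · exact ⟨![0, 0, 0, 1, 0, 0], by simp [Lmap, vec6_five]⟩
    · exact ⟨![0, 0, 0, 0, 1, 0], by simp [Lmap, vec6_five]⟩
    · exact ⟨![0, 0, 0, 0, 0, 1], by simp [Lmap, vec6_five]⟩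

theorem picard_formula_dim_two
    (τ : Matrix (Fin 2) (Fin 2) ℂ)
    (him : (τ.map Complex.im).det ≠ 0) :
    picard 2 τ = 6 - Module.finrank ℚ (Submodule.span ℚ
      ({1, τ 0 0, τ 0 1, τ 1 0, τ 1 1, τ.det} : Set ℂ)) := by
  have hrk := LinearMap.finrank_range_add_finrank_ker (Lmap τ)
  rw [Module.finrank_fin_fun, range_Lmap] at hrk
  have h1 : picard 2 τ = Module.finrank ℚ (LinearMap.ker (Lmap τ)) := by
    rw [picard, NSSpace_eq]
    exact (LinearEquiv.finrank_eq
      (Submodule.equivMapOfInjective iotaMap iotaMap_injective (LinearMap.ker (Lmap τ)))).symm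
  omega

end
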